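/- Assume in addition λ ≥ T²/4 and let ε > 0. Then for every t ∈ (0,T) the map y ↦ θ_ε(t,y)^{−2} φ(t,y)^{−2} is differentiable at x and its spatial gradient satisfies ‖∇_y (θ_ε^{−2} φ^{−2})(t,x)‖ ≤ 4 · λ · μ · L · θ_ε(t,x)^{−2} φ(t,x)^{−1}. (The paper's weight estimate (B010) on the spatial gradient of θ_ε^{−2} φ^{−2}, with explicit constant.) -/

import Mathlib

set_option maxHeartbeats 1000000 in

/-- For `λ ≥ T²/4` and `ε > 0`, the spatial map `y ↦ θ_ε(t,y)⁻² φ(t,y)⁻²` is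
differentiable at `x` with
`‖∇_y(θ_ε⁻²φ⁻²)(t,x)‖ ≤ 4 · λ · μ · L · θ_ε(t,x)⁻² φ(t,x)⁻¹`
(paper's weight estimate (B010), explicit constant). -/
theorem carleman_regularized_weight_gradient_bound
    (T μ lam M L : ℝ) (N : ℕ) (hN : 1 ≤ N)
    (x : EuclideanSpace ℝ (Fin N)) (ψ : EuclideanSpace ℝ (Fin N) → ℝ)
    (hT : 0 < T) (hμ : 1 ≤ μ) (hlam : 1 ≤ lam) (hM : 0 < M) (hL : 0 ≤ L)
    (hψ : ∀ y, 0 ≤ ψ y ∧ ψ y ≤ M)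
    (hψdiff : DifferentiableAt ℝ ψ x) (hψL : ‖fderiv ℝ ψ x‖ ≤ L)
    (hlamT : T ^ 2 / 4 ≤ lam)
    (φ : ℝ → EuclideanSpace ℝ (Fin N) → ℝ)
    (αε θε : ℝ → ℝ → EuclideanSpace ℝ (Fin N) → ℝ)
    (hφ : ∀ t y, φ t y = Real.exp (μ * ψ y) / (t * (T - t)))
    (hαε : ∀ ε t y, αε ε t y =
      (Real.exp (μ * ψ y) - Real.exp (2 * μ * M)) / ((t + ε) * (T - t + ε)))
    (hθε : ∀ ε t y, θε ε t y = Real.exp (lam * αε ε t y)) :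
    ∀ ε > (0 : ℝ), ∀ t ∈ Set.Ioo (0 : ℝ) T,
      DifferentiableAt ℝ (fun y => (θε ε t y ^ 2)⁻¹ * (φ t y ^ 2)⁻¹) x ∧
        ‖fderiv ℝ (fun y => (θε ε t y ^ 2)⁻¹ * (φ t y ^ 2)⁻¹) x‖ ≤
          4 * lam * μ * L * ((θε ε t x ^ 2)⁻¹ * (φ t x)⁻¹) := by
  intro ε hε t ht
  obtain ⟨ht0, htT⟩ := ht
  simp only [hθε, hαε, hφ]
  set p : ℝ := t * (T - t) with hpdef
  set s : ℝ := (t + ε) * (T - t + ε) with hsdef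
  set K : ℝ := Real.exp (2 * μ * M) with hKdef
  have hμ0 : (0:ℝ) < μ := by linarith
  have hlam0 : (0:ℝ) < lam := by linarith
  have hp : 0 < p := mul_pos ht0 (by linarith)
  have hs : 0 < s := mul_pos (by linarith) (by linarith)
  have hps : p ≤ s := by
    apply mul_le_mul (by linarith) (by linarith) (by linarith) (by linarith)
  have hpT : p ≤ T ^ 2 / 4 := by rw [hpdef]; nlinarith [sq_nonneg (T - 2 * t)]
  clear_value p s K
  have hexp : ∀ a b : ℝ, (Real.exp a ^ 2)⁻¹ * (Real.exp b ^ 2)⁻¹ =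
      Real.exp (-(2 * a) - 2 * b) := by
    intro a b
    rw [← Real.exp_nat_mul, ← Real.exp_nat_mul, ← Real.exp_neg, ← Real.exp_neg,
      ← Real.exp_add]
    push_cast
    ring_nf
  have hEq : (fun y => ((Real.exp (lam * ((Real.exp (μ * ψ y) - K) / s))) ^ 2)⁻¹ *
      ((Real.exp (μ * ψ y) / p) ^ 2)⁻¹) =
      fun y => p ^ 2 * Real.exp (-(2 * (lam * ((Real.exp (μ * ψ y) - K) / s))) -
        2 * (μ * ψ y)) := by
    funext y
    rw [← hexp]
    have hA : Real.exp (μ * ψ y) ≠ 0 := Real.exp_ne_zero _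
    field_simp
  -- derivative of the scalar function
  set A : ℝ := Real.exp (μ * ψ x) with hAdef
  have hA0 : 0 < A := Real.exp_pos _
  have hA1 : 1 ≤ A := Real.one_le_exp (mul_nonneg hμ0.le (hψ x).1)
  have h1 : HasDerivAt (fun r : ℝ => μ * r) μ (ψ x) := by
    simpa using (hasDerivAt_id (ψ x)).const_mul μ
  have h2 : HasDerivAt (fun r : ℝ => Real.exp (μ * r)) (A * μ) (ψ x) := h1.exp
  have h8 : HasDerivAt
      (fun r : ℝ => -(2 * (lam * ((Real.exp (μ * r) - K) / s))) - 2 * (μ * r))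
      (-(2 * (lam * (A * μ / s))) - 2 * μ) (ψ x) := by
    have h4 := (((h2.sub_const K).div_const s).const_mul lam).const_mul 2
    have h7 := h1.const_mul 2
    exact h4.neg.sub h7
  have hG : HasDerivAt
      (fun r : ℝ => p ^ 2 * Real.exp (-(2 * (lam * ((Real.exp (μ * r) - K) / s))) -
        2 * (μ * r)))
      (p ^ 2 * (Real.exp (-(2 * (lam * ((A - K) / s))) - 2 * (μ * ψ x)) *
        (-(2 * (lam * (A * μ / s))) - 2 * μ))) (ψ x) := h8.exp.const_mul (p ^ 2)
  set D : ℝ := p ^ 2 * (Real.exp (-(2 * (lam * ((A - K) / s))) - 2 * (μ * ψ x)) *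
    (-(2 * (lam * (A * μ / s))) - 2 * μ)) with hDdef
  have hF : HasFDerivAt
      (fun y => p ^ 2 * Real.exp (-(2 * (lam * ((Real.exp (μ * ψ y) - K) / s))) -
        2 * (μ * ψ y))) (D • fderiv ℝ ψ x) x :=
    hG.comp_hasFDerivAt x hψdiff.hasFDerivAt
  rw [hEq]
  refine ⟨hF.differentiableAt, ?_⟩
  rw [hF.fderiv]
  set u : ℝ := Real.exp (lam * ((A - K) / s)) with hudef
  have hu0 : 0 < u := Real.exp_pos _
  set E : ℝ := Real.exp (-(2 * (lam * ((A - K) / s))) - 2 * (μ * ψ x)) with hEdef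
  have hE : E = (u ^ 2)⁻¹ * (A ^ 2)⁻¹ := (hexp _ _).symm
  have hE0 : 0 < E := hEdef ▸ Real.exp_pos _
  clear_value A u E D
  have hB : |(-(2 * (lam * (A * μ / s))) - 2 * μ)| =
      2 * (lam * (A * μ / s)) + 2 * μ := by
    rw [abs_of_nonpos]
    · ring
    · have h0 : 0 ≤ 2 * (lam * (A * μ / s)) :=
        mul_nonneg (by norm_num) (mul_nonneg hlam0.le
          (div_nonneg (mul_nonneg hA0.le hμ0.le) hs.le))
      linarith
  have hkey : p * (2 * (lam * (A * μ / s)) + 2 * μ) ≤ 4 * lam * μ * A := by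
    clear hF hG hEq h8 h2 h1 hexp hB hψL hψdiff hψ
    have hq : p / s ≤ 1 := (div_le_one hs).mpr hps
    have he1 : p * (2 * (lam * (A * μ / s)) + 2 * μ) =
        2 * lam * A * μ * (p / s) + 2 * μ * p := by field_simp
    rw [he1]
    have c1 : (0:ℝ) ≤ 2 * lam * A * μ :=
      mul_nonneg (mul_nonneg (by linarith) hA0.le) hμ0.le
    have c2 : (0:ℝ) ≤ 2 * μ := by linarith
    have c3 : (0:ℝ) ≤ 2 * μ * lam := mul_nonneg c2 hlam0.le
    have f1 := mul_le_mul_of_nonneg_left hq c1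
    have f2 := mul_le_mul_of_nonneg_left hpT c2
    have f3 := mul_le_mul_of_nonneg_left hlamT c2
    have f4 := mul_le_mul_of_nonneg_left hA1 c3
    nlinarith [f1, f2, f3, f4]
  have hnorm : ‖D • fderiv ℝ ψ x‖ = |D| * ‖fderiv ℝ ψ x‖ := by
    rw [norm_smul, Real.norm_eq_abs]
  rw [hnorm]
  have habsD : |D| = p ^ 2 * E * (2 * (lam * (A * μ / s)) + 2 * μ) := by
    rw [hDdef, abs_mul, abs_mul, hB, abs_of_pos hE0,
      abs_of_pos (pow_pos hp 2)]
    ring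
  calc |D| * ‖fderiv ℝ ψ x‖ ≤ |D| * L :=
        mul_le_mul_of_nonneg_left hψL (abs_nonneg _)
    _ ≤ 4 * lam * μ * L * ((u ^ 2)⁻¹ * (A / p)⁻¹) := by
        rw [habsD, hE]
        have hfac : (0:ℝ) ≤ p * L * (u ^ 2)⁻¹ * (A ^ 2)⁻¹ :=
          mul_nonneg (mul_nonneg (mul_nonneg hp.le hL)
            (inv_nonneg.mpr (sq_nonneg u))) (inv_nonneg.mpr (sq_nonneg A))
        have hmain := mul_le_mul_of_nonneg_right hkey hfac
        have eL : p ^ 2 * ((u ^ 2)⁻¹ * (A ^ 2)⁻¹) *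
            (2 * (lam * (A * μ / s)) + 2 * μ) * L =
            p * (2 * (lam * (A * μ / s)) + 2 * μ) *
            (p * L * (u ^ 2)⁻¹ * (A ^ 2)⁻¹) := by ring
        have eR : 4 * lam * μ * L * ((u ^ 2)⁻¹ * (A / p)⁻¹) =
            4 * lam * μ * A * (p * L * (u ^ 2)⁻¹ * (A ^ 2)⁻¹) := by
          field_simp
        rw [eL, eR]
        exact hmain
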